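/- Let (M,⊗,1,σ) be a symmetric monoidal category with equalizers and coequalizers that are preserved by the functors X⊗(−) and (−)⊗X for every object X, and let i:K→A be a monomorphism in Hopf_coc(M). Then i is left normal if and only if i is right normal. Explicitly: there exists ψ: A⊗K→K in M with i∘ψ = ad_A∘(Id_A⊗i) if and only if there exists ψ': K⊗A→K in M with i∘ψ' = ad'_A∘(i⊗Id_A). -/

import Mathlib

/-!
Common infrastructure for formalizing results on cocommutative Hopf monoids
in (abelian) symmetric monoidal categories.
-/

open CategoryTheory MonoidalCategory CategoryTheory.Limits

universe v u

namespace HopfSemiabelian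

variable {C : Type u} [Category.{v} C] [MonoidalCategory.{v} C]

section HopfBasics
variable [BraidedCategory C]

/-- The underlying object in `C` of a Hopf monoid. -/
abbrev hCar (H : Hopf C) : C := H.X
/-- The multiplication of a Hopf monoid. -/
abbrev hMul (H : Hopf C) : hCar H ⊗ hCar H ⟶ hCar H := MonObj.mul (X := hCar H)
/-- The unit of a Hopf monoid. -/
abbrev hOne (H : Hopf C) : 𝟙_ C ⟶ hCar H := MonObj.one (X := hCar H)
/-- The comultiplication of a Hopf monoid. -/
abbrev hComul (H : Hopf C) : hCar H ⟶ hCar H ⊗ hCar H := ComonObj.comul (X := hCar H)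
/-- The counit of a Hopf monoid. -/
abbrev hCounit (H : Hopf C) : hCar H ⟶ 𝟙_ C := ComonObj.counit (X := hCar H)
/-- The antipode of a Hopf monoid. -/
abbrev hS (H : Hopf C) : hCar H ⟶ hCar H := HopfObj.antipode (X := hCar H)

/-- The underlying comonoid in `C` of a Hopf monoid. -/
def hComon (H : Hopf C) : Comon C where
  X := hCar H
  comon := inferInstance

/-- The underlying monoid of a Hopf monoid. -/
abbrev hMon (H : Hopf C) : Mon C := Mon.mk (hCar H)

/-- A Hopf monoid is cocommutative if `σ ∘ Δ = Δ`. -/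
def IsCocomm (H : Hopf C) : Prop := hComul H ≫ (β_ (hCar H) (hCar H)).hom = hComul H

variable (C) in
/-- `Hopf_coc(M)`: the category of cocommutative Hopf monoids in `C`,
as a full subcategory of `Hopf_ C` (morphisms are bimonoid morphisms). -/
def HopfCoc := ObjectProperty.FullSubcategory (fun H : Hopf C => IsCocomm H)

instance : Category (HopfCoc C) := ObjectProperty.FullSubcategory.category _

/-- The underlying morphism in `C` of a morphism of cocommutative Hopf monoids. -/
def uhom {K A : HopfCoc C} (f : K ⟶ A) : hCar K.obj ⟶ hCar A.obj := f.hom.hom.hom.hom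

/-- The underlying morphism in `C` of a morphism of Hopf monoids. -/
def uhomH {K A : Hopf C} (f : K ⟶ A) : hCar K ⟶ hCar A := f.hom.hom.hom

/-- The zero morphism between two Hopf monoids (factoring through the trivial one). -/
def hzero (A B : Hopf C) : A ⟶ B :=
  InducedCategory.homMk (Bimon.toTrivial A.toBimon ≫ Bimon.trivialTo B.toBimon)

/-- The zero morphism between two cocommutative Hopf monoids. -/
def zeroH (A B : HopfCoc C) : A ⟶ B := InducedCategory.homMk (hzero A.obj B.obj)

end HopfBasics

section Adjoint
variable [BraidedCategory C]

/-- The adjoint morphism `ad = m(m ⊗ S)(Id ⊗ σ)(Δ ⊗ Id) : A ⊗ A ⟶ A`. -/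
def adOf {A : C} (m : A ⊗ A ⟶ A) (Δ : A ⟶ A ⊗ A) (S : A ⟶ A) : A ⊗ A ⟶ A :=
  (Δ ▷ A) ≫ (α_ A A A).hom ≫ (A ◁ (β_ A A).hom) ≫ (α_ A A A).inv ≫ (m ⊗ₘ S) ≫ m

/-- The right adjoint morphism `ad' = m(m ⊗ Id)(σ ⊗ Id)(Id ⊗ (S ⊗ Id)Δ) : A ⊗ A ⟶ A`. -/
def adOf' {A : C} (m : A ⊗ A ⟶ A) (Δ : A ⟶ A ⊗ A) (S : A ⟶ A) : A ⊗ A ⟶ A :=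
  (A ◁ (Δ ≫ (S ▷ A))) ≫ (α_ A A A).inv ≫ ((β_ A A).hom ▷ A) ≫ (m ▷ A) ≫ m

/-- The adjoint morphism `ad_H` of a Hopf monoid. -/
def hAd (H : Hopf C) : hCar H ⊗ hCar H ⟶ hCar H := adOf (hMul H) (hComul H) (hS H)

/-- The right adjoint morphism `ad'_H` of a Hopf monoid. -/
def hAd' (H : Hopf C) : hCar H ⊗ hCar H ⟶ hCar H := adOf' (hMul H) (hComul H) (hS H)

/-- A monomorphism `i : K ⟶ A` in `Hopf_coc(M)` is (left) normal if there is
`ψ : A ⊗ K ⟶ K` with `i ∘ ψ = ad_A ∘ (Id_A ⊗ i)`. -/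
def IsLeftNormal {K A : HopfCoc C} (i : K ⟶ A) : Prop :=
  ∃ ψ : hCar A.obj ⊗ hCar K.obj ⟶ hCar K.obj,
    ψ ≫ uhom i = (hCar A.obj ◁ uhom i) ≫ hAd A.obj

/-- A monomorphism `i : K ⟶ A` in `Hopf_coc(M)` is right normal if there is
`ψ' : K ⊗ A ⟶ K` with `i ∘ ψ' = ad'_A ∘ (i ⊗ Id_A)`. -/
def IsRightNormal {K A : HopfCoc C} (i : K ⟶ A) : Prop :=
  ∃ ψ' : hCar K.obj ⊗ hCar A.obj ⟶ hCar K.obj,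
    ψ' ≫ uhom i = (uhom i ▷ hCar A.obj) ≫ hAd' A.obj

end Adjoint

section Aux
variable [SymmetricCategory C]

/-- In a cocommutative Hopf monoid in a symmetric monoidal category,
the antipode squares to the identity. -/
theorem antipode_sq (A : Hopf C) (hc : IsCocomm A) :
    hS A ≫ hS A = 𝟙 (hCar A) := by
  have hss : (hS A ⊗ₘ hS A) ≫ hMul A =
      (β_ (hCar A) (hCar A)).hom ≫ hMul A ≫ hS A := by
    rw [HopfObj.mul_antipode, ← BraidedCategory.braiding_naturality_assoc,
      SymmetricCategory.symmetry_assoc]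
  apply left_inv_eq_right_inv
    (M := Conv (hCar A) (hCar A)) (a := hS A)
  · erw [Conv.mul_eq, Conv.one_eq]
    simp only [comp_whiskerRight,
      Category.assoc]
    slice_lhs 3 4 => rw [← MonoidalCategory.tensorHom_def]
    slice_lhs 3 4 => rw [hss]
    slice_lhs 2 3 => rw [BraidedCategory.braiding_naturality_left]
    slice_lhs 1 2 => rw [hc]
    simp only [Category.assoc]
    rw [HopfObj.antipode_right_assoc, HopfObj.one_antipode]
  · erw [Conv.mul_eq, Conv.one_eq]
    simp
    rfl

/-- For a cocommutative Hopf monoid in a symmetric monoidal category,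
the right adjoint morphism is obtained from the adjoint morphism by braiding and the
antipode. -/
theorem hAd'_eq (A : Hopf C) (hc : IsCocomm A) :
    hAd' A = (β_ (hCar A) (hCar A)).hom ≫ (hS A ▷ hCar A) ≫ hAd A := by
  dsimp only [hAd, hAd', adOf, adOf']
  -- rewrite the right hand side
  slice_rhs 2 3 => rw [← comp_whiskerRight, HopfObj.antipode_comul, comp_whiskerRight,
    comp_whiskerRight]
  slice_rhs 2 3 => rw [← comp_whiskerRight, hc]
  slice_rhs 1 2 => rw [← BraidedCategory.braiding_naturality_right]
  slice_rhs 3 3 => rw [MonoidalCategory.tensorHom_def, comp_whiskerRight]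
  slice_rhs 2 3 => rw [← BraidedCategory.braiding_naturality_right]
  slice_rhs 4 5 => rw [associator_naturality_middle]
  slice_rhs 5 6 => rw [← MonoidalCategory.whiskerLeft_comp,
    BraidedCategory.braiding_naturality_left, MonoidalCategory.whiskerLeft_comp]
  slice_rhs 6 7 => rw [associator_inv_naturality_right]
  slice_rhs 8 8 => rw [MonoidalCategory.tensorHom_def]
  slice_rhs 7 8 => rw [whisker_exchange]
  slice_rhs 8 9 => rw [← MonoidalCategory.whiskerLeft_comp, antipode_sq A hc,
    MonoidalCategory.whiskerLeft_id]
  -- now kill the pure braiding part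
  slice_rhs 3 3 => rw [BraidedCategory.braiding_tensor_right_hom]
  simp only [Category.assoc, Iso.inv_hom_id_assoc]
  slice_rhs 6 7 => rw [← MonoidalCategory.whiskerLeft_comp, SymmetricCategory.symmetry,
    MonoidalCategory.whiskerLeft_id]
  simp only [MonoidalCategory.whiskerLeft_comp, Category.assoc, Category.comp_id,
    Category.id_comp, Iso.hom_inv_id_assoc]

/-- For a cocommutative Hopf monoid in a symmetric monoidal category,
the adjoint morphism is obtained from the right adjoint morphism by braiding and
the antipode. -/
theorem hAd_eq (A : Hopf C) (hc : IsCocomm A) :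
    hAd A = (β_ (hCar A) (hCar A)).hom ≫ (hCar A ◁ hS A) ≫ hAd' A := by
  rw [hAd'_eq A hc, BraidedCategory.braiding_naturality_right_assoc,
    SymmetricCategory.symmetry_assoc, ← comp_whiskerRight_assoc, antipode_sq A hc,
    id_whiskerRight, Category.id_comp]

end Aux

/-- **Statement 15.** In a symmetric monoidal category with equalizers and coequalizers
preserved by tensoring, a monomorphism `i : K ⟶ A` in `Hopf_coc(M)` is left normal if and
only if it is right normal. -/
theorem leftNormal_iff_rightNormal
    [SymmetricCategory C] [HasEqualizers C] [HasCoequalizers C]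
    [∀ X : C, PreservesLimitsOfShape WalkingParallelPair (tensorLeft X)]
    [∀ X : C, PreservesLimitsOfShape WalkingParallelPair (tensorRight X)]
    [∀ X : C, PreservesColimitsOfShape WalkingParallelPair (tensorLeft X)]
    [∀ X : C, PreservesColimitsOfShape WalkingParallelPair (tensorRight X)]
    (K A : HopfCoc C) (i : K ⟶ A) (hi : Mono i) :
    IsLeftNormal i ↔ IsRightNormal i := by
  constructor
  · rintro ⟨ψ, hψ⟩
    refine ⟨(β_ (hCar K.obj) (hCar A.obj)).hom ≫ (hS A.obj ▷ hCar K.obj) ≫ ψ, ?_⟩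
    rw [Category.assoc, Category.assoc, hψ, hAd'_eq A.obj A.2,
      BraidedCategory.braiding_naturality_left_assoc, whisker_exchange_assoc]
  · rintro ⟨ψ', hψ'⟩
    refine ⟨(β_ (hCar A.obj) (hCar K.obj)).hom ≫ (hCar K.obj ◁ hS A.obj) ≫ ψ', ?_⟩
    rw [Category.assoc, Category.assoc, hψ', hAd_eq A.obj A.2, whisker_exchange_assoc,
      ← BraidedCategory.braiding_naturality_right_assoc]

end HopfSemiabelian
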